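/- Let S be a best choice recoloring of G and let v be a vertex of G. In the restricted sequence S_{|N⁺[v]}, no two consecutive steps both recolor v; moreover, there is at most one index i such that steps i and i+2 of S_{|N⁺[v]} recolor v while step i+1 recolors a vertex of N⁺(v), and if such an index exists then step i+2 is the last step of S_{|N⁺[v]}. -/

import Mathlib

/-!
Framework for the Best Choice Recoloring Algorithm on a chordal graph with
clique number at most `3`, with `k = 5` colors.

A recoloring sequence is a list of steps, each step `(v, c)` recoloring the
vertex `v` with the color `c`.
-/

variable {V : Type*} [DecidableEq V]

/-- `σ` is a proper coloring of `G`. -/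
def IsProperColoring (G : SimpleGraph V) (σ : V → Fin 5) : Prop :=
  ∀ ⦃x y⦄, G.Adj x y → σ x ≠ σ y

/-- Apply a list of recoloring steps to a coloring. -/
def applySteps (α : V → Fin 5) (S : List (V × Fin 5)) : V → Fin 5 :=
  S.foldl (fun σ s => Function.update σ s.1 s.2) α

/-- The number of steps of `S` recoloring the vertex `v`, i.e. `|S_{|v}|`. -/
def recolCount (S : List (V × Fin 5)) (v : V) : ℕ :=
  (S.filter fun s => decide (s.1 = v)).length

/-- `S_{|X}`: the subsequence of the steps of `S` recoloring vertices of `X`. -/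
noncomputable def restrict (X : Set V) (S : List (V × Fin 5)) : List (V × Fin 5) :=
  S.filter fun s => @decide (s.1 ∈ X) (Classical.propDecidable _)

/-- The position, inside the restricted sequence `S_{|X}`, corresponding to the step
of index `i` of `S` (when that step recolors a vertex of `X`). -/
noncomputable def posIn (X : Set V) (S : List (V × Fin 5)) (i : ℕ) : ℕ :=
  (restrict X (S.take i)).length

/-- The step of index `i` (0-based) of the sequence `S` recolors the vertex `x`. -/
def recolorsAt (S : List (V × Fin 5)) (i : ℕ) (x : V) : Prop :=
  ∃ c : Fin 5, S[i]? = some (x, c)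

/-- A perfect elimination ordering `[v₁, …, vₙ]` witnessing chordality with clique
number at most `3`: each vertex has at most two neighbors appearing later in the
list, and when it has two such neighbors they are adjacent. -/
def IsPEOList (G : SimpleGraph V) : List V → Prop
  | [] => True
  | v :: vs =>
      (¬ ∃ w₁ ∈ vs, ∃ w₂ ∈ vs, ∃ w₃ ∈ vs,
          G.Adj v w₁ ∧ G.Adj v w₂ ∧ G.Adj v w₃ ∧ w₁ ≠ w₂ ∧ w₁ ≠ w₃ ∧ w₂ ≠ w₃) ∧
      (∀ w₁ ∈ vs, ∀ w₂ ∈ vs, G.Adj v w₁ → G.Adj v w₂ → w₁ ≠ w₂ → G.Adj w₁ w₂) ∧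
      IsPEOList G vs

/-- `N⁺(x)`: the out-neighborhood of `x`, i.e. its neighbors appearing later in the
perfect elimination ordering `order`. -/
def NPlus (G : SimpleGraph V) (order : List V) (x : V) : Set V :=
  {y | G.Adj x y ∧ order.idxOf x < order.idxOf y}

/-- `N⁺[x] = N⁺(x) ∪ {x}`: the inclusive out-neighborhood of `x`. -/
def NPlusC (G : SimpleGraph V) (order : List V) (x : V) : Set V :=
  insert x (NPlus G order x)

/-- `c` is a valid color for `u` in the current coloring `σ`: it differs from the
current colors of `u` and of its neighbors among the active vertices `A`. -/
def ValidCol (G : SimpleGraph V) (A : List V) (u : V) (σ : V → Fin 5) (c : Fin 5) : Prop :=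
  c ≠ σ u ∧ ∀ w ∈ A, G.Adj u w → c ≠ σ w

/-- The list of colors assigned to (active) neighbors of `u` by the steps of `L`. -/
noncomputable def nbrColors (G : SimpleGraph V) (A : List V) (u : V)
    (L : List (V × Fin 5)) : List (Fin 5) :=
  (L.filter fun s => @decide (G.Adj u s.1 ∧ s.1 ∈ A) (Classical.propDecidable _)).map
    Prod.snd

/-- `c` is a best choice color for `u` (with target color `bu`), given the current
coloring `σ` and the list `future` of the remaining steps (the current one included):
`c` is valid for `u`, and it is `bu` if `bu` does not appear among the colors assigned
to neighbors of `u` in `future`; otherwise it avoids those colors if some valid color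
does; otherwise it is a valid color whose first occurrence among those colors is
latest. -/
def IsBestChoice (G : SimpleGraph V) (A : List V) (u : V) (bu : Fin 5)
    (σ : V → Fin 5) (future : List (V × Fin 5)) (c : Fin 5) : Prop :=
  ValidCol G A u σ c ∧
    (bu ∉ nbrColors G A u future → c = bu) ∧
    (bu ∈ nbrColors G A u future →
      ((∃ c', ValidCol G A u σ c' ∧ c' ∉ nbrColors G A u future) →
          c ∉ nbrColors G A u future) ∧
      ((∀ c', ValidCol G A u σ c' → c' ∈ nbrColors G A u future) →
          ∀ c', ValidCol G A u σ c' →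
            (nbrColors G A u future).idxOf c' ≤ (nbrColors G A u future).idxOf c))

/-- `LBC G A u bu σ S' S`: the sequence `S` is obtained from the sequence `S'`
(a recoloring sequence on the active vertices `A`, starting from the coloring `σ`)
by the Local Best Choice for the vertex `u` with target color `bu`: just before each
step of `S'` recoloring a neighbor of `u` with the current color of `u`, a step
recoloring `u` with a best choice color is inserted, and at the very end `u` is
recolored to `bu` if needed. -/
inductive LBC (G : SimpleGraph V) (A : List V) (u : V) (bu : Fin 5) :
    (V → Fin 5) → List (V × Fin 5) → List (V × Fin 5) → Prop
  | done {σ : V → Fin 5} (h : σ u = bu) : LBC G A u bu σ [] []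
  | final {σ : V → Fin 5} (h : σ u ≠ bu) : LBC G A u bu σ [] [(u, bu)]
  | skip {σ : V → Fin 5} {w : V} {c : Fin 5} {rest S : List (V × Fin 5)}
      (h : ¬(G.Adj u w ∧ w ∈ A ∧ c = σ u))
      (ih : LBC G A u bu (Function.update σ w c) rest S) :
      LBC G A u bu σ ((w, c) :: rest) ((w, c) :: S)
  | insert {σ : V → Fin 5} {w : V} {c : Fin 5} {rest S : List (V × Fin 5)} {c' : Fin 5}
      (h : G.Adj u w ∧ w ∈ A ∧ c = σ u)
      (hbc : IsBestChoice G A u bu σ ((w, c) :: rest) c')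
      (ih : LBC G A u bu (Function.update (Function.update σ u c') w c) rest S) :
      LBC G A u bu σ ((w, c) :: rest) ((u, c') :: (w, c) :: S)

/-- `BCR G α β order S`: `S` is a best choice recoloring of (the subgraph of `G`
induced by the vertices of) `order` from `α` to `β`, obtained by applying the Local
Best Choice successively to the vertices of `order` from the last one to the first
one. -/
inductive BCR (G : SimpleGraph V) (α β : V → Fin 5) : List V → List (V × Fin 5) → Prop
  | nil : BCR G α β [] []
  | cons {v : V} {vs : List V} {S' S : List (V × Fin 5)}
      (hS' : BCR G α β vs S') (h : LBC G vs v (β v) α S' S) :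
      BCR G α β (v :: vs) S

/-- The step of (0-based) index `p` of the restricted sequence `R = S_{|N⁺[v]}` is
saved for `v`: it recolors a vertex of `N⁺(v)` and either `v` is recolored at no step
up to and including it, or `v` is recolored at no step from it on, or neither of the
two steps preceding it in `R` recolors `v`. -/
def SavedForR (G : SimpleGraph V) (order : List V) (v : V)
    (R : List (V × Fin 5)) (p : ℕ) : Prop :=
  (∃ w ∈ NPlus G order v, recolorsAt R p w) ∧
    ((∀ j ≤ p, ¬ recolorsAt R j v) ∨
     (∀ j, p ≤ j → ¬ recolorsAt R j v) ∨
     (∀ q, p - 2 ≤ q → q < p → ¬ recolorsAt R q v))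

/-- The step of index `i` of `S` is saved for the vertex `v`. -/
def SavedFor (G : SimpleGraph V) (order : List V) (S : List (V × Fin 5)) (v : V)
    (i : ℕ) : Prop :=
  (∃ w ∈ NPlus G order v, recolorsAt S i w) ∧
    SavedForR G order v (restrict (NPlusC G order v) S) (posIn (NPlusC G order v) S i)

set_option linter.unusedSectionVars false
section BCRAux

variable {V : Type*} [DecidableEq V]

/-! ### Basic lemmas about `restrict`, `nbrColors`, `recolorsAt` -/

lemma restrict_nil (X : Set V) : restrict X ([] : List (V × Fin 5)) = [] := rfl

lemma restrict_cons_mem {X : Set V} {p : V × Fin 5} (S : List (V × Fin 5))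
    (h : p.1 ∈ X) : restrict X (p :: S) = p :: restrict X S := by
  simp [restrict, List.filter_cons, h]

lemma restrict_cons_not_mem {X : Set V} {p : V × Fin 5} (S : List (V × Fin 5))
    (h : p.1 ∉ X) : restrict X (p :: S) = restrict X S := by
  simp [restrict, List.filter_cons, h]

lemma nbrColors_cons_pos {G : SimpleGraph V} {A : List V} {u : V} {p : V × Fin 5}
    (L : List (V × Fin 5)) (h : G.Adj u p.1 ∧ p.1 ∈ A) :
    nbrColors G A u (p :: L) = p.2 :: nbrColors G A u L := by
  simp [nbrColors, List.filter_cons, h]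

lemma nbrColors_cons_neg {G : SimpleGraph V} {A : List V} {u : V} {p : V × Fin 5}
    (L : List (V × Fin 5)) (h : ¬(G.Adj u p.1 ∧ p.1 ∈ A)) :
    nbrColors G A u (p :: L) = nbrColors G A u L := by
  simp only [nbrColors, List.filter_cons]
  rw [if_neg (by simpa using h)]

lemma recolorsAt_nil (i : ℕ) (x : V) : ¬ recolorsAt ([] : List (V × Fin 5)) i x := by
  simp [recolorsAt]

lemma recolorsAt_cons_succ (p : V × Fin 5) (T : List (V × Fin 5)) (i : ℕ) (x : V) :
    recolorsAt (p :: T) (i + 1) x ↔ recolorsAt T i x := by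
  simp [recolorsAt]

lemma recolorsAt_cons_zero (p : V × Fin 5) (T : List (V × Fin 5)) (x : V) :
    recolorsAt (p :: T) 0 x ↔ p.1 = x := by
  obtain ⟨a, b⟩ := p
  simp [recolorsAt, eq_comm]

end BCRAux


section GoodSec
variable {V : Type*} [DecidableEq V]

/-- Structural shape of the restriction of a best choice recoloring to `N⁺[v]`. -/
inductive Good (v : V) : List (V × Fin 5) → Prop
  | nil : Good v []
  | single (c : Fin 5) : Good v [(v, c)]
  | skip {w : V} {c : Fin 5} {T : List (V × Fin 5)} (hw : w ≠ v) (h : Good v T) :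
      Good v ((w, c) :: T)
  | ins {c' : Fin 5} {w : V} {c : Fin 5} {T : List (V × Fin 5)} (hw : w ≠ v) (h : Good v T)
      (hH : ∀ x T₂, T = (v, x) :: T₂ → T₂ = []) : Good v ((v, c') :: (w, c) :: T)

lemma good_not_double {v : V} {T : List (V × Fin 5)} (h : Good v T) :
    ∀ i, ¬ (recolorsAt T i v ∧ recolorsAt T (i + 1) v) := by
  induction h with
  | nil => exact fun i ⟨h1, _⟩ => recolorsAt_nil i v h1
  | single c => rintro i ⟨h1, h2⟩; simp [recolorsAt] at h2
  | skip hw hg ih =>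
      rintro i ⟨h1, h2⟩
      cases i with
      | zero => rw [recolorsAt_cons_zero] at h1; exact hw h1
      | succ j =>
          rw [recolorsAt_cons_succ] at h1 h2
          exact ih j ⟨h1, h2⟩
  | ins hw hg hH ih =>
      rintro i ⟨h1, h2⟩
      match i with
      | 0 => rw [recolorsAt_cons_succ, recolorsAt_cons_zero] at h2; exact hw h2
      | 1 => rw [recolorsAt_cons_succ, recolorsAt_cons_zero] at h1; exact hw h1
      | (j + 2) =>
          rw [recolorsAt_cons_succ, recolorsAt_cons_succ] at h1 h2
          exact ih j ⟨h1, h2⟩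

lemma good_last {v : V} {T : List (V × Fin 5)} (h : Good v T) :
    ∀ i, recolorsAt T i v → recolorsAt T (i + 2) v → i + 3 = T.length := by
  induction h with
  | nil => exact fun i h1 _ => absurd h1 (recolorsAt_nil i v)
  | single c => intro i h1 h2; exfalso; simp [recolorsAt] at h2
  | skip hw hg ih =>
      intro i h1 h2
      cases i with
      | zero => rw [recolorsAt_cons_zero] at h1; exact absurd h1 hw
      | succ j =>
          rw [recolorsAt_cons_succ] at h1 h2
          have := ih j h1 h2
          rw [List.length_cons]; omega
  | @ins c' w c T hw hg hH ih =>
      intro i h1 h2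
      match i with
      | 0 =>
          rw [recolorsAt_cons_succ, recolorsAt_cons_succ] at h2
          obtain ⟨x, hx⟩ := h2
          match T, hx with
          | p :: T₂, hx =>
              have hp : p = (v, x) := by simpa using hx
              subst hp
              have := hH x T₂ rfl
              subst this
              simp
      | 1 => rw [recolorsAt_cons_succ, recolorsAt_cons_zero] at h1; exact absurd h1 hw
      | (j + 2) =>
          rw [recolorsAt_cons_succ, recolorsAt_cons_succ] at h1 h2
          have := ih j h1 h2
          simp only [List.length_cons]; omega

end GoodSec

section LBCSec
variable {V : Type*} [DecidableEq V] {G : SimpleGraph V} {A : List V} {u : V} {bu : Fin 5}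
  {X : Set V}

lemma lbc_steps {σ : V → Fin 5} {S' S : List (V × Fin 5)} (h : LBC G A u bu σ S' S) :
    (∀ p ∈ S', p.1 ∈ A) → ∀ p ∈ S, p.1 = u ∨ p.1 ∈ A := by
  induction h with
  | done _ => intro _ p hp; simp at hp
  | final _ =>
      intro _ p hp
      rcases List.mem_singleton.1 hp with rfl
      exact Or.inl rfl
  | @skip σ w c rest S h hsub IH =>
      intro hst p hp
      rcases List.mem_cons.1 hp with rfl | hp
      · exact Or.inr (hst (w, c) (List.mem_cons_self))
      · exact IH (fun q hq => hst q (List.mem_cons_of_mem _ hq)) p hp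
  | @insert σ w c rest S c' h hbc hsub IH =>
      intro hst p hp
      rcases List.mem_cons.1 hp with rfl | hp
      · exact Or.inl rfl
      rcases List.mem_cons.1 hp with rfl | hp
      · exact Or.inr (hst (w, c) (List.mem_cons_self))
      · exact IH (fun q hq => hst q (List.mem_cons_of_mem _ hq)) p hp

lemma bcr_steps {α β : V → Fin 5} {L : List V} {S : List (V × Fin 5)} (h : BCR G α β L S) :
    ∀ p ∈ S, p.1 ∈ L := by
  induction h with
  | nil => intro p hp; simp at hp
  | @cons v vs S' S hS' hl IH =>
      intro p hp
      rcases lbc_steps hl IH p hp with h | h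
      · rw [h]; exact List.mem_cons_self
      · exact List.mem_cons_of_mem _ h

lemma lbc_restrict_eq (hX : u ∉ X) {σ : V → Fin 5} {S' S : List (V × Fin 5)}
    (h : LBC G A u bu σ S' S) : restrict X S = restrict X S' := by
  induction h with
  | done _ => rfl
  | final _ => rw [restrict_cons_not_mem _ hX]
  | @skip σ w c rest S h hsub IH =>
      by_cases hw : w ∈ X
      · rw [restrict_cons_mem _ hw, restrict_cons_mem _ hw, IH]
      · rw [restrict_cons_not_mem _ hw, restrict_cons_not_mem _ hw, IH]
  | @insert σ w c rest S c' h hbc hsub IH =>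
      rw [restrict_cons_not_mem _ hX]
      by_cases hw : w ∈ X
      · rw [restrict_cons_mem _ hw, restrict_cons_mem _ hw, IH]
      · rw [restrict_cons_not_mem _ hw, restrict_cons_not_mem _ hw, IH]

/-- If the restriction to `X` of the output of `LBC` starts with a step recoloring `u`
followed by at least one more step, then the first color given to a neighbor of `u`
in the input sequence is the current color of `u`. -/
lemma lbc_first_nbr (hu : u ∉ A) (hXA : ∀ w ∈ A, G.Adj u w → w ∈ X)
    {σ : V → Fin 5} {rest Sr : List (V × Fin 5)} (h : LBC G A u bu σ rest Sr) :
    (∀ p ∈ rest, p.1 ∈ A) → ∀ (x : Fin 5) (T₂ : List (V × Fin 5)),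
      restrict X Sr = (u, x) :: T₂ → T₂ ≠ [] →
      ∃ tail, nbrColors G A u rest = σ u :: tail := by
  induction h with
  | done _ => intro _ x T₂ hr _; simp [restrict] at hr
  | final _ =>
      intro _ x T₂ hr hT₂
      by_cases hux : u ∈ X
      · rw [restrict_cons_mem _ hux, restrict_nil] at hr
        have := congrArg List.tail hr
        simp at this
        exact absurd this hT₂
      · rw [restrict_cons_not_mem _ hux, restrict_nil] at hr
        simp at hr
  | @skip σ w c rest S hcond hsub IH =>
      intro hst x T₂ hr hT₂
      have hwA : w ∈ A := hst (w, c) (List.mem_cons_self)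
      have hwu : w ≠ u := fun e => hu (e ▸ hwA)
      by_cases hwX : w ∈ X
      · rw [restrict_cons_mem _ hwX] at hr
        exact absurd (congrArg Prod.fst (List.head_eq_of_cons_eq hr)) hwu
      · have hnadj : ¬ G.Adj u w := fun ha => hwX (hXA w hwA ha)
        rw [restrict_cons_not_mem _ hwX] at hr
        obtain ⟨tail, htail⟩ := IH (fun p hp => hst p (List.mem_cons_of_mem _ hp)) x T₂ hr hT₂
        rw [Function.update_of_ne (Ne.symm hwu)] at htail
        exact ⟨tail, by rw [nbrColors_cons_neg _ (fun hc => hnadj hc.1)]; exact htail⟩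
  | @insert σ w c rest S c' hcond hbc hsub IH =>
      intro _ _ _ _ _
      obtain ⟨hadj, hwA, hcσ⟩ := hcond
      exact ⟨nbrColors G A u rest, by rw [nbrColors_cons_pos _ ⟨hadj, hwA⟩, hcσ]⟩

end LBCSec

section MainSec
variable {V : Type*} [DecidableEq V] {G : SimpleGraph V} {A : List V} {u : V} {bu : Fin 5}
  {X : Set V}

lemma exists_fifth (a b c d : Fin 5) : ∃ e : Fin 5, e ≠ a ∧ e ≠ b ∧ e ≠ c ∧ e ≠ d := by
  by_contra hcon
  push_neg at hcon
  have hsub : (Finset.univ : Finset (Fin 5)) ⊆ {a, b, c, d} := by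
    intro z _
    simp only [Finset.mem_insert, Finset.mem_singleton]
    by_contra hz
    push_neg at hz
    exact hz.2.2.2 (hcon z hz.1 hz.2.1 hz.2.2.1)
  have h5 : (5 : ℕ) ≤ ({a, b, c, d} : Finset (Fin 5)).card := by
    calc (5 : ℕ) = (Finset.univ : Finset (Fin 5)).card := by simp
    _ ≤ _ := Finset.card_le_card hsub
  have h4 : ({a, b, c, d} : Finset (Fin 5)).card ≤ 4 := by
    refine le_trans (Finset.card_insert_le _ _) (Nat.succ_le_succ ?_)
    refine le_trans (Finset.card_insert_le _ _) (Nat.succ_le_succ ?_)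
    refine le_trans (Finset.card_insert_le _ _) (Nat.succ_le_succ ?_)
    simp
  omega

lemma lbc_good (hu : u ∉ A) (hXu : u ∈ X) (hXA : ∀ w ∈ A, G.Adj u w → w ∈ X)
    (htwo : ∃ w₁ w₂ : V, ∀ w ∈ A, G.Adj u w → w = w₁ ∨ w = w₂)
    {σ : V → Fin 5} {S' S : List (V × Fin 5)} (h : LBC G A u bu σ S' S) :
    (∀ p ∈ S', p.1 ∈ A) → Good u (restrict X S) := by
  induction h with
  | done _ => intro _; exact Good.nil
  | final _ =>
      intro _
      rw [restrict_cons_mem _ hXu, restrict_nil]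
      exact Good.single bu
  | @skip σ w c rest S hcond hsub IH =>
      intro hst
      have hwA : w ∈ A := hst (w, c) (List.mem_cons_self)
      have hwu : w ≠ u := fun e => hu (e ▸ hwA)
      have IH' := IH (fun p hp => hst p (List.mem_cons_of_mem _ hp))
      by_cases hwX : w ∈ X
      · rw [restrict_cons_mem _ hwX]; exact Good.skip hwu IH'
      · rw [restrict_cons_not_mem _ hwX]; exact IH'
  | @insert σ w c rest S c' hcond hbc hsub IH =>
      intro hst
      obtain ⟨hadj, hwA, hcσ⟩ := hcond
      have hwu : w ≠ u := fun e => hu (e ▸ hwA)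
      have hst' : ∀ p ∈ rest, p.1 ∈ A := fun p hp => hst p (List.mem_cons_of_mem _ hp)
      have hwX : w ∈ X := hXA w hwA hadj
      rw [restrict_cons_mem _ hXu, restrict_cons_mem _ hwX]
      refine Good.ins hwu (IH hst') ?_
      intro x T₂ hT
      by_contra hT₂ne
      obtain ⟨tail, htail⟩ := lbc_first_nbr hu hXA hsub hst' x T₂ hT hT₂ne
      have hσu : (Function.update (Function.update σ u c') w c) u = c' := by
        rw [Function.update_of_ne (Ne.symm hwu), Function.update_self]
      rw [hσu] at htail
      have hfut : nbrColors G A u ((w, c) :: rest) = c :: c' :: tail := by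
        rw [nbrColors_cons_pos _ ⟨hadj, hwA⟩, htail]
      have hc'ne : c' ≠ σ u := hbc.1.1
      have hc'c : c' ≠ c := by rw [hcσ]; exact hc'ne
      have hc'mem : c' ∈ nbrColors G A u ((w, c) :: rest) := by rw [hfut]; simp
      have hbumem : bu ∈ nbrColors G A u ((w, c) :: rest) := by
        by_contra hb
        exact hb ((hbc.2.1 hb) ▸ hc'mem)
      obtain ⟨h1, h2⟩ := hbc.2.2 hbumem
      by_cases hex : ∃ c0, ValidCol G A u σ c0 ∧ c0 ∉ nbrColors G A u ((w, c) :: rest)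
      · exact (h1 hex) hc'mem
      · push_neg at hex
        obtain ⟨w₁, w₂, htwo'⟩ := htwo
        obtain ⟨c'', hc1, hc2, hc3, hc4⟩ := exists_fifth (σ u) (σ w₁) (σ w₂) c'
        have hvalid'' : ValidCol G A u σ c'' := by
          refine ⟨hc1, fun w' hw' hadj' => ?_⟩
          rcases htwo' w' hw' hadj' with rfl | rfl
          · exact hc2
          · exact hc3
        have hle := h2 hex c'' hvalid''
        rw [hfut] at hle
        have hcc'' : c ≠ c'' := by rw [hcσ]; exact Ne.symm hc1
        have i1 : List.idxOf c' (c :: c' :: tail) = 1 := by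
          rw [List.idxOf_cons_ne _ (Ne.symm hc'c), List.idxOf_cons_self]
        have i2 : 2 ≤ List.idxOf c'' (c :: c' :: tail) := by
          rw [List.idxOf_cons_ne _ hcc'', List.idxOf_cons_ne _ (Ne.symm hc4)]
          omega
        omega

end MainSec

section TopSec
variable {V : Type*} [DecidableEq V] {G : SimpleGraph V} {X : Set V}

lemma bcr_peel {α β : V → Fin 5} (X : Set V) :
    ∀ (pre : List V) {M : List V} {S : List (V × Fin 5)}, BCR G α β (pre ++ M) S →
      (∀ u' ∈ pre, u' ∉ X) → ∃ S₀, BCR G α β M S₀ ∧ restrict X S = restrict X S₀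
  | [], M, S, h, _ => ⟨S, h, rfl⟩
  | u' :: pre, M, S, h, hpre => by
      cases h with
      | cons hS' hl =>
          obtain ⟨S₀, h₀, he⟩ :=
            bcr_peel X pre hS' (fun z hz => hpre z (List.mem_cons_of_mem _ hz))
          exact ⟨S₀, h₀, (lbc_restrict_eq (hpre u' (List.mem_cons_self)) hl).trans he⟩

lemma peo_peel {G : SimpleGraph V} :
    ∀ (pre : List V) {M : List V}, IsPEOList G (pre ++ M) → IsPEOList G M
  | [], _, h => h
  | _ :: pre, _, h => peo_peel pre h.2.2

end TopSec


/-- Let `S` be a best choice recoloring of `G` and let `v` be a vertex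
of `G`. In the restricted sequence `R = S_{|N⁺[v]}`, no two consecutive steps both
recolor `v`; moreover, there is at most one index `i` such that steps `i` and `i+2` of
`R` recolor `v` while step `i+1` recolors a vertex of `N⁺(v)`, and if such an index
exists then step `i+2` is the last step of `R` (here this is expressed, in 0-based
indexing, by `i + 3 = R.length`, which in particular forces uniqueness of such `i`). -/
theorem statement_3 {V : Type*} [Fintype V] [DecidableEq V] (G : SimpleGraph V)
    (order : List V) (hnd : order.Nodup) (hall : ∀ x : V, x ∈ order)
    (hpeo : IsPEOList G order)
    (α β : V → Fin 5) (hα : IsProperColoring G α) (hβ : IsProperColoring G β)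
    (S : List (V × Fin 5)) (hS : BCR G α β order S)
    (v : V) :
    (∀ i, ¬(recolorsAt (restrict (NPlusC G order v) S) i v ∧
            recolorsAt (restrict (NPlusC G order v) S) (i + 1) v)) ∧
    (∀ i, recolorsAt (restrict (NPlusC G order v) S) i v →
          (∃ w ∈ NPlus G order v, recolorsAt (restrict (NPlusC G order v) S) (i + 1) w) →
          recolorsAt (restrict (NPlusC G order v) S) (i + 2) v →
          i + 3 = (restrict (NPlusC G order v) S).length) := by
  obtain ⟨pre, post, rfl⟩ := List.append_of_mem (hall v)
  set X := NPlusC G (pre ++ v :: post) v with hXdef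
  rw [List.nodup_append'] at hnd
  have hvpre : v ∉ pre := fun hv => hnd.2.2 hv (List.mem_cons_self)
  have hvpost : v ∉ post := (List.nodup_cons.1 hnd.2.1).1
  have hidxv : List.idxOf v (pre ++ v :: post) = pre.length := by
    rw [List.idxOf_append_of_notMem hvpre, List.idxOf_cons_self]; omega
  have hXpre : ∀ u' ∈ pre, u' ∉ X := by
    intro u' hu' hmem
    rcases Set.mem_insert_iff.1 hmem with rfl | hmem
    · exact hvpre hu'
    · have hiu : List.idxOf u' (pre ++ v :: post) < pre.length := by
        rw [List.idxOf_append_of_mem hu']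
        exact List.idxOf_lt_length_iff.2 hu'
      have := hmem.2
      omega
  have hXA : ∀ w ∈ post, G.Adj v w → w ∈ X := by
    intro w hw hadj
    have hwv : w ≠ v := fun e => hvpost (e ▸ hw)
    have hwpre : w ∉ pre := fun hwp => hnd.2.2 hwp (List.mem_cons_of_mem _ hw)
    refine Set.mem_insert_iff.2 (Or.inr ⟨hadj, ?_⟩)
    rw [hidxv, List.idxOf_append_of_notMem hwpre, List.idxOf_cons_ne _ (Ne.symm hwv)]
    omega
  have hpeo' : IsPEOList G (v :: post) := peo_peel pre hpeo
  have h3 := hpeo'.1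
  have htwo : ∃ w₁ w₂ : V, ∀ w ∈ post, G.Adj v w → w = w₁ ∨ w = w₂ := by
    by_cases hex1 : ∃ w ∈ post, G.Adj v w
    · obtain ⟨w₁, hw₁, ha₁⟩ := hex1
      by_cases hex2 : ∃ w ∈ post, G.Adj v w ∧ w ≠ w₁
      · obtain ⟨w₂, hw₂, ha₂, hne⟩ := hex2
        refine ⟨w₁, w₂, fun w hw ha => ?_⟩
        by_contra hcon
        push_neg at hcon
        exact h3 ⟨w₁, hw₁, w₂, hw₂, w, hw, ha₁, ha₂, ha,
          Ne.symm hne, Ne.symm hcon.1, Ne.symm hcon.2⟩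
      · push_neg at hex2
        exact ⟨w₁, w₁, fun w hw ha => Or.inl (hex2 w hw ha)⟩
    · push_neg at hex1
      exact ⟨v, v, fun w hw ha => absurd ha (hex1 w hw)⟩
  obtain ⟨S₀, hS₀, hres⟩ := bcr_peel X pre hS hXpre
  cases hS₀ with
  | cons hS' hl =>
      have hgood := lbc_good hvpost (Set.mem_insert _ _) hXA htwo hl (bcr_steps hS')
      rw [hres]
      exact ⟨good_not_double hgood, fun i h1 _ h2 => good_last hgood i h1 h2⟩
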